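/- For any f : 𝔽_p^n → ℂ and any phase polynomial g of degree at most d taking values of modulus 1, the inner product satisfies |⟨f,g⟩| ≤ ‖f‖_{U^{d+1}}, where ⟨f,g⟩ = 𝔼_x f(x)·conj(g(x)). -/

import Mathlib

/-- The `k`-th Gowers uniformity norm of `f : G → ℂ` on a finite abelian group `G`. -/
noncomputable def gowersNorm {G : Type} [AddCommGroup G] [Fintype G] [DecidableEq G]
    (k : ℕ) (f : G → ℂ) : ℝ :=
  (‖((∑ x : G, ∑ y : Fin k → G, ∏ S : Finset (Fin k),
      (fun z : ℂ => (starRingEnd ℂ) z)^[k - S.card] (f (x + ∑ i ∈ S, y i))) /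
    (Fintype.card G : ℂ) ^ (k + 1))‖) ^ ((1 : ℝ) / 2 ^ k)

/-- Multiplicative derivative in direction `y`: `(Δ̃_y f)(x) = f(x+y)·conj(f(x))`. -/
def mderiv {G : Type} [AddCommGroup G] (y : G) (f : G → ℂ) : G → ℂ :=
  fun x => f (x + y) * (starRingEnd ℂ) (f x)

/-- Iterated multiplicative derivatives along a list of directions. -/
def mderivs {G : Type} [AddCommGroup G] : List G → (G → ℂ) → (G → ℂ)
  | [], f => f
  | y :: ys, f => mderivs ys (mderiv y f)

/-- `f` is a phase polynomial of degree at most `d` if all `(d+1)`-fold multiplicative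
derivatives of `f` are identically `1`. -/
def IsPhasePoly {G : Type} [AddCommGroup G] (d : ℕ) (f : G → ℂ) : Prop :=
  ∀ ys : List G, ys.length = d + 1 → mderivs ys f = fun _ => 1
open Finset

section Aux

variable {G : Type} [AddCommGroup G] [Fintype G] [DecidableEq G]

/-- The Gowers cube product. -/
noncomputable def gcube (k : ℕ) (h : G → ℂ) (y : Fin k → G) (x : G) : ℂ :=
  ∏ S : Finset (Fin k),
    (fun z : ℂ => (starRingEnd ℂ) z)^[k - S.card] (h (x + ∑ i ∈ S, y i))

/-- The (unnormalized) Gowers sum. -/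
noncomputable def gS (k : ℕ) (h : G → ℂ) : ℂ := ∑ x : G, ∑ y : Fin k → G, gcube k h y x

lemma conjIter_mul (m : ℕ) (a b : ℂ) :
    (fun z : ℂ => (starRingEnd ℂ) z)^[m] (a * b)
      = (fun z : ℂ => (starRingEnd ℂ) z)^[m] a * (fun z : ℂ => (starRingEnd ℂ) z)^[m] b := by
  induction m generalizing a b with
  | zero => rfl
  | succ m ih => simp [Function.iterate_succ_apply, map_mul, ih]

lemma conjIter_conj (m : ℕ) (a : ℂ) :
    (fun z : ℂ => (starRingEnd ℂ) z)^[m] ((starRingEnd ℂ) a)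
      = (starRingEnd ℂ) ((fun z : ℂ => (starRingEnd ℂ) z)^[m] a) := by
  induction m generalizing a with
  | zero => rfl
  | succ m ih => simp only [Function.iterate_succ_apply, ih]

lemma conjIter_succ (m : ℕ) (a : ℂ) :
    (fun z : ℂ => (starRingEnd ℂ) z)^[m + 1] a
      = (starRingEnd ℂ) ((fun z : ℂ => (starRingEnd ℂ) z)^[m] a) :=
  Function.iterate_succ_apply' _ _ _

lemma conjIter_one (m : ℕ) :
    (fun z : ℂ => (starRingEnd ℂ) z)^[m] (1 : ℂ) = 1 := by
  induction m with
  | zero => rfl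
  | succ m ih => simp [Function.iterate_succ_apply', ih]

lemma prod_powerset_map {α β M : Type*} [DecidableEq α] [DecidableEq β] [CommMonoid M]
    (e : α ↪ β) (s : Finset α) (F : Finset β → M) :
    ∏ t ∈ (s.map e).powerset, F t = ∏ t ∈ s.powerset, F (t.map e) := by
  refine (Finset.prod_bij (fun t _ => t.map e) ?_ ?_ ?_ ?_).symm
  · intro t ht
    rw [mem_powerset] at ht ⊢
    exact Finset.map_subset_map.2 ht
  · intro a _ b _ hab
    exact Finset.map_injective e hab
  · intro t ht
    rw [mem_powerset, Finset.subset_map_iff] at ht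
    obtain ⟨u, hu, rfl⟩ := ht
    exact ⟨u, mem_powerset.2 hu, rfl⟩
  · intro t _; rfl

lemma gcube_zero (h : G → ℂ) (y : Fin 0 → G) (x : G) : gcube 0 h y x = h x := by
  unfold gcube
  rw [show (univ : Finset (Finset (Fin 0))) = {∅} from rfl]
  simp

lemma gcube_succ (k : ℕ) (h : G → ℂ) (y : Fin k → G) (z : G) (x : G) :
    gcube (k + 1) h (Fin.snoc y z) x = gcube k (mderiv z h) y x := by
  unfold gcube
  have hnl : Fin.last k ∉ Finset.map Fin.castSuccEmb (univ : Finset (Fin k)) := by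
    intro hmem
    obtain ⟨i, -, hi⟩ := Finset.mem_map.1 hmem
    exact (Fin.castSucc_lt_last i).ne hi
  rw [← Finset.powerset_univ, Fin.univ_castSuccEmb, Finset.cons_eq_insert,
    Finset.prod_powerset_insert hnl,
    prod_powerset_map, prod_powerset_map,
    Finset.powerset_univ, ← Finset.prod_mul_distrib]
  refine Finset.prod_congr rfl fun T _ => ?_
  have hlast : Fin.last k ∉ T.map Fin.castSuccEmb := by
    intro hmem
    obtain ⟨i, -, hi⟩ := Finset.mem_map.1 hmem
    exact (Fin.castSucc_lt_last i).ne hi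
  have hcard : T.card ≤ k := by
    simpa using Finset.card_le_card (Finset.subset_univ T)
  have h1 : (T.map Fin.castSuccEmb).card = T.card := Finset.card_map _
  have h2 : (insert (Fin.last k) (T.map Fin.castSuccEmb)).card = T.card + 1 := by
    rw [Finset.card_insert_of_notMem hlast, h1]
  have hsum : ∑ i ∈ T.map Fin.castSuccEmb, Fin.snoc y z i = ∑ i ∈ T, y i := by
    rw [Finset.sum_map]
    refine Finset.sum_congr rfl fun i _ => ?_
    rw [show (Fin.castSuccEmb i : Fin (k + 1)) = i.castSucc from rfl]
    exact @Fin.snoc_castSucc k (fun _ => G) z y i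
  have hsum2 : ∑ i ∈ insert (Fin.last k) (T.map Fin.castSuccEmb), Fin.snoc y z i
      = z + ∑ i ∈ T, y i := by
    rw [Finset.sum_insert hlast, hsum, Fin.snoc_last]
  rw [h1, h2, hsum, hsum2]
  have e1 : k + 1 - T.card = (k - T.card) + 1 := by omega
  have e2 : k + 1 - (T.card + 1) = k - T.card := by omega
  rw [e1, e2, conjIter_succ]
  have harg : mderiv z h (x + ∑ i ∈ T, y i)
      = h (x + (z + ∑ i ∈ T, y i)) * (starRingEnd ℂ) (h (x + ∑ i ∈ T, y i)) := by
    simp only [mderiv]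
    congr 2
    abel
  rw [harg, conjIter_mul, conjIter_conj, mul_comm]

lemma gS_zero (h : G → ℂ) : gS 0 h = ∑ x : G, h x := by
  unfold gS
  refine Finset.sum_congr rfl fun x _ => ?_
  rw [Fintype.sum_unique]
  exact gcube_zero h _ x

lemma gS_succ (k : ℕ) (h : G → ℂ) : gS (k + 1) h = ∑ z : G, gS k (mderiv z h) := by
  unfold gS
  have step : ∀ x : G, ∑ y : Fin (k + 1) → G, gcube (k + 1) h y x
      = ∑ zy : G × (Fin k → G), gcube k (mderiv zy.1 h) zy.2 x := by
    intro x
    rw [← Equiv.sum_comp (Fin.snocEquiv (fun _ => G)) (fun y => gcube (k + 1) h y x)]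
    refine Finset.sum_congr rfl fun zy _ => ?_
    rw [show (Fin.snocEquiv (fun _ => G)) zy = Fin.snoc zy.2 zy.1 from rfl]
    exact gcube_succ k h zy.2 zy.1 x
  calc ∑ x : G, ∑ y : Fin (k + 1) → G, gcube (k + 1) h y x
      = ∑ x : G, ∑ zy : G × (Fin k → G), gcube k (mderiv zy.1 h) zy.2 x := by
        exact Finset.sum_congr rfl fun x _ => step x
    _ = ∑ zy : G × (Fin k → G), ∑ x : G, gcube k (mderiv zy.1 h) zy.2 x := Finset.sum_comm
    _ = ∑ z : G, ∑ y : Fin k → G, ∑ x : G, gcube k (mderiv z h) y x :=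
        Fintype.sum_prod_type (f := fun zy : G × (Fin k → G) => ∑ x : G, gcube k (mderiv zy.1 h) zy.2 x)
    _ = ∑ z : G, ∑ x : G, ∑ y : Fin k → G, gcube k (mderiv z h) y x := by
        exact Finset.sum_congr rfl fun z _ => Finset.sum_comm

lemma gS_one (h : G → ℂ) :
    gS 1 h = ((Complex.normSq (∑ x : G, h x) : ℝ) : ℂ) := by
  rw [show (1 : ℕ) = 0 + 1 from rfl, gS_succ]
  have : ∀ z : G, gS 0 (mderiv z h) = ∑ x : G, h (x + z) * (starRingEnd ℂ) (h x) := by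
    intro z; rw [gS_zero]; rfl
  simp_rw [this]
  rw [Finset.sum_comm]
  have : ∀ x : G, ∑ z : G, h (x + z) * (starRingEnd ℂ) (h x)
      = (∑ w : G, h w) * (starRingEnd ℂ) (h x) := by
    intro x
    rw [← Finset.sum_mul]
    congr 1
    exact Fintype.sum_equiv (Equiv.addLeft x) _ _ fun z => rfl
  simp_rw [this]
  rw [← Finset.mul_sum, ← map_sum, Complex.mul_conj]

lemma gS_real (k : ℕ) (h : G → ℂ) : ∃ r : ℝ, 0 ≤ r ∧ gS (k + 1) h = (r : ℂ) := by
  induction k generalizing h with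
  | zero => exact ⟨Complex.normSq (∑ x : G, h x), Complex.normSq_nonneg _, gS_one h⟩
  | succ k ih =>
    choose r hr hgs using fun z : G => ih (mderiv z h)
    refine ⟨∑ z : G, r z, Finset.sum_nonneg fun z _ => hr z, ?_⟩
    rw [gS_succ]
    push_cast
    exact Finset.sum_congr rfl fun z _ => hgs z


lemma abs_sum_pow_le_gS (k : ℕ) (h : G → ℂ) :
    ‖(∑ x : G, h x)‖ ^ (2 ^ k)
      ≤ (Fintype.card G : ℝ) ^ (2 ^ k - (k + 1)) * ‖(gS k h)‖ := by
  induction k generalizing h with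
  | zero => simp [gS_zero]
  | succ k ih =>
    have habs2 : ‖(∑ x : G, h x)‖ ^ 2 = ‖(gS 1 h)‖ := by
      rw [gS_one, Complex.norm_real, Real.norm_eq_abs, abs_of_nonneg (Complex.normSq_nonneg _),
        Complex.sq_norm]
    have hstart : ‖(∑ x : G, h x)‖ ^ 2 ^ (k + 1)
        = ‖(gS 1 h)‖ ^ 2 ^ k := by
      rw [pow_succ, pow_mul', habs2]
    rcases k with _ | j
    · rw [hstart, pow_one]
      simp
    · set N := (Fintype.card G : ℝ) with hN
      have hN0 : (0 : ℝ) < N := by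
        rw [hN]
        exact_mod_cast (Fintype.card_pos : 0 < Fintype.card G)
      set m := 2 ^ (j + 1) with hm
      have hm1 : 1 ≤ m := Nat.one_le_two_pow
      have hb : ∀ z : G, (0 : ℝ) ≤ ‖(gS 0 (mderiv z h))‖ :=
        fun z => norm_nonneg _
      have h1 : ‖(gS 1 h)‖ ≤ ∑ z : G, ‖(gS 0 (mderiv z h))‖ := by
        rw [show (1 : ℕ) = 0 + 1 from rfl, gS_succ]
        exact norm_sum_le _ _
      have h2 : ‖(gS 1 h)‖ ^ m
          ≤ (∑ z : G, ‖(gS 0 (mderiv z h))‖) ^ m :=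
        pow_le_pow_left₀ (norm_nonneg _) h1 m
      have h3 : (∑ z : G, ‖(gS 0 (mderiv z h))‖) ^ m
          ≤ N ^ (m - 1) * ∑ z : G, ‖(gS 0 (mderiv z h))‖ ^ m := by
        have := pow_sum_le_card_mul_sum_pow (s := (Finset.univ : Finset G))
          (f := fun z => ‖(gS 0 (mderiv z h))‖) (fun i _ => hb i) (m - 1)
        rw [Nat.sub_add_cancel hm1] at this
        simpa [hN] using this
      have h4 : ∀ z : G, ‖(gS 0 (mderiv z h))‖ ^ m
          ≤ N ^ (m - (j + 2)) * ‖(gS (j + 1) (mderiv z h))‖ := by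
        intro z
        rw [gS_zero]
        exact ih (mderiv z h)
      choose r hr hgs using fun z : G => gS_real j (mderiv z h)
      have h5 : ∑ z : G, ‖(gS (j + 1) (mderiv z h))‖
          = ‖(gS (j + 2) h)‖ := by
        have : gS (j + 2) h = ((∑ z : G, r z : ℝ) : ℂ) := by
          rw [gS_succ]
          push_cast
          exact Finset.sum_congr rfl fun z _ => hgs z
        rw [this, Complex.norm_real, Real.norm_eq_abs,
          abs_of_nonneg (Finset.sum_nonneg fun z _ => hr z)]
        refine Finset.sum_congr rfl fun z _ => ?_
        rw [hgs z, Complex.norm_real, Real.norm_eq_abs, abs_of_nonneg (hr z)]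
      have hjm : j + 2 ≤ m := by
        have := Nat.lt_two_pow_self (n := j + 1)
        omega
      calc ‖(∑ x : G, h x)‖ ^ 2 ^ (j + 1 + 1)
          = ‖(gS 1 h)‖ ^ m := hstart
        _ ≤ (∑ z : G, ‖(gS 0 (mderiv z h))‖) ^ m := h2
        _ ≤ N ^ (m - 1) * ∑ z : G, ‖(gS 0 (mderiv z h))‖ ^ m := h3
        _ ≤ N ^ (m - 1) * ∑ z : G, N ^ (m - (j + 2)) * ‖(gS (j + 1) (mderiv z h))‖ := by
            refine mul_le_mul_of_nonneg_left (Finset.sum_le_sum fun z _ => h4 z) ?_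
            positivity
        _ = N ^ (m - 1) * N ^ (m - (j + 2)) * ∑ z : G, ‖(gS (j + 1) (mderiv z h))‖ := by
            rw [← Finset.mul_sum, mul_assoc]
        _ = N ^ (2 ^ (j + 1 + 1) - (j + 1 + 1 + 1)) * ‖(gS (j + 1 + 1) h)‖ := by
            rw [h5, ← pow_add]
            congr 2
            have h2m : 2 ^ (j + 1 + 1) = 2 * m := by rw [hm, pow_succ]; ring
            omega

lemma gcube_mul_conj (k : ℕ) (f g : G → ℂ) (y : Fin k → G) (x : G) :
    gcube k (fun t => f t * (starRingEnd ℂ) (g t)) y x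
      = gcube k f y x * (starRingEnd ℂ) (gcube k g y x) := by
  unfold gcube
  rw [map_prod, ← Finset.prod_mul_distrib]
  refine Finset.prod_congr rfl fun S _ => ?_
  rw [conjIter_mul, conjIter_conj]

lemma gcube_eq_mderivs (k : ℕ) (g : G → ℂ) (y : Fin k → G) :
    ∃ ys : List G, ys.length = k ∧ ∀ x : G, gcube k g y x = mderivs ys g x := by
  induction k generalizing g with
  | zero => exact ⟨[], rfl, fun x => gcube_zero g y x⟩
  | succ k ih =>
    obtain ⟨ys, hlen, hys⟩ := ih (mderiv (y (Fin.last k)) g) (Fin.init y)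
    refine ⟨y (Fin.last k) :: ys, by simp [hlen], fun x => ?_⟩
    have : gcube (k + 1) g y x
        = gcube k (mderiv (y (Fin.last k)) g) (Fin.init y) x := by
      conv_lhs => rw [← Fin.snoc_init_self y]
      exact gcube_succ k g (Fin.init y) (y (Fin.last k)) x
    rw [this, hys x]
    rfl

end Aux

/-- For any `f : 𝔽_p^n → ℂ` and any unimodular phase polynomial `g` of degree at most `d`,
`|⟨f,g⟩| ≤ ‖f‖_{U^{d+1}}`, where `⟨f,g⟩ = 𝔼_x f(x)·conj(g(x))`. -/
theorem abs_inner_le_gowersNorm {p n : ℕ} [Fact p.Prime] (d : ℕ)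
    (f g : (Fin n → ZMod p) → ℂ) (hg : IsPhasePoly d g)
    (hmod : ∀ x, ‖(g x)‖ = 1) :
    ‖((∑ x : Fin n → ZMod p, f x * (starRingEnd ℂ) (g x)) /
      (Fintype.card (Fin n → ZMod p) : ℂ))‖ ≤ gowersNorm (d + 1) f := by
  classical
  set h : (Fin n → ZMod p) → ℂ := fun x => f x * (starRingEnd ℂ) (g x) with hh
  set N : ℝ := (Fintype.card (Fin n → ZMod p) : ℝ) with hNdef
  have hN0 : (0 : ℝ) < N := by
    rw [hNdef]
    exact_mod_cast (Fintype.card_pos : 0 < Fintype.card (Fin n → ZMod p))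
  have hSeq : gS (d + 1) h = gS (d + 1) f := by
    unfold gS
    refine Finset.sum_congr rfl fun x _ => Finset.sum_congr rfl fun y _ => ?_
    obtain ⟨ys, hlen, hys⟩ := gcube_eq_mderivs (d + 1) g y
    rw [hh, gcube_mul_conj, hys x, hg ys hlen]
    simp
  have hgn : gowersNorm (d + 1) f
      = (‖(gS (d + 1) f / (Fintype.card (Fin n → ZMod p) : ℂ) ^ (d + 1 + 1))‖)
        ^ ((1 : ℝ) / 2 ^ (d + 1)) := rfl
  rw [hgn]
  have hB : ‖(gS (d + 1) f / (Fintype.card (Fin n → ZMod p) : ℂ) ^ (d + 1 + 1))‖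
      = ‖(gS (d + 1) f)‖ / N ^ (d + 2) := by
    rw [norm_div, norm_pow, Complex.norm_natCast, hNdef]
  rw [hB]
  have hL : ‖((∑ x : Fin n → ZMod p, h x) / (Fintype.card (Fin n → ZMod p) : ℂ))‖
      = ‖(∑ x : Fin n → ZMod p, h x)‖ / N := by
    rw [norm_div, Complex.norm_natCast, hNdef]
  rw [show (∑ x : Fin n → ZMod p, f x * (starRingEnd ℂ) (g x))
      = ∑ x : Fin n → ZMod p, h x from rfl, hL]
  have hx0 : (0 : ℝ) ≤ ‖(∑ x : Fin n → ZMod p, h x)‖ / N :=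
    div_nonneg (norm_nonneg _) hN0.le
  have hy0 : (0 : ℝ) ≤ ‖(gS (d + 1) f)‖ / N ^ (d + 2) :=
    div_nonneg (norm_nonneg _) (by positivity)
  have hz : (0 : ℝ) < (2 : ℝ) ^ (d + 1) := by positivity
  rw [one_div, Real.le_rpow_inv_iff_of_pos hx0 hy0 hz]
  rw [show ((2 : ℝ) ^ (d + 1)) = ((2 ^ (d + 1) : ℕ) : ℝ) by push_cast; ring,
    Real.rpow_natCast]
  rw [div_pow, div_le_div_iff₀ (by positivity) (by positivity)]
  have key := abs_sum_pow_le_gS (d + 1) h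
  rw [hSeq] at key
  have hle : d + 2 ≤ 2 ^ (d + 1) := by
    have := Nat.lt_two_pow_self (n := d + 1)
    omega
  calc ‖(∑ x : Fin n → ZMod p, h x)‖ ^ 2 ^ (d + 1) * N ^ (d + 2)
      ≤ (N ^ (2 ^ (d + 1) - (d + 1 + 1)) * ‖(gS (d + 1) f)‖) * N ^ (d + 2) := by
        exact mul_le_mul_of_nonneg_right key (by positivity)
    _ = ‖(gS (d + 1) f)‖ * N ^ 2 ^ (d + 1) := by
        rw [mul_comm (N ^ (2 ^ (d + 1) - (d + 1 + 1)))]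
        rw [mul_assoc, ← pow_add]
        congr 2
        omega
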